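/- Let p be a prime, n ≥ 1, and let m be an integer with p^n ≤ m ≤ 2p^n − 1; set k = ν_p(m). Then the binomial coefficient C(2p^n − p^k − 1, 2p^n − p^k − m) is not divisible by p. -/

import Mathlib

/-- For a prime `p`, `n ≥ 1` and `p^n ≤ m ≤ 2p^n − 1`, with `k = ν_p(m)`, the
binomial coefficient `C(2p^n − p^k − 1, 2p^n − p^k − m)` is not divisible by `p`. -/
theorem stmt12 (p n m : ℕ) (hp : p.Prime) (hn : 1 ≤ n)
    (hm1 : p ^ n ≤ m) (hm2 : m ≤ 2 * p ^ n - 1) :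
    ¬ p ∣ Nat.choose (2 * p ^ n - p ^ padicValNat p m - 1)
        (2 * p ^ n - p ^ padicValNat p m - m) := by
  haveI : Fact p.Prime := ⟨hp⟩
  have hp2 : 2 ≤ p := hp.two_le
  set k := padicValNat p m with hk
  have hpn_pos : 0 < p ^ n := Nat.pow_pos (by omega)
  have hpn2 : 2 ≤ p ^ n := hp2.trans (Nat.le_self_pow (by omega) p)
  have hm0 : m ≠ 0 := by omega
  have hpk_dvd : p ^ k ∣ m := pow_padicValNat_dvd
  have hpk_pos : 0 < p ^ k := Nat.pow_pos (by omega)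
  have hnotdvd : ¬ p ^ (k + 1) ∣ m := pow_succ_padicValNat_not_dvd hm0
  -- k ≤ n
  have hkn : k ≤ n := by
    have h1 : p ^ k ≤ m := Nat.le_of_dvd (by omega) hpk_dvd
    have h2 : m < p ^ (n + 1) := by
      have e1 : p ^ (n + 1) = p * p ^ n := by ring
      have e2 : 2 * p ^ n ≤ p * p ^ n := Nat.mul_le_mul_right _ hp2
      omega
    have := (Nat.pow_lt_pow_iff_right (by omega : 1 < p)).mp (lt_of_le_of_lt h1 h2)
    omega
  have hpkn : p ^ k ≤ p ^ n := Nat.pow_le_pow_right (by omega) hkn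
  -- m + p^k ≤ 2 p^n
  have hkey : m + p ^ k ≤ 2 * p ^ n := by
    have h1 : p ^ k ∣ 2 * p ^ n := Dvd.dvd.mul_left (pow_dvd_pow p hkn) 2
    have h2 : p ^ k ∣ 2 * p ^ n - m := Nat.dvd_sub h1 hpk_dvd
    have h3 : 0 < 2 * p ^ n - m := by omega
    have := Nat.le_of_dvd h3 h2
    omega
  set N := 2 * p ^ n - p ^ k - 1 with hN
  set b := 2 * p ^ n - p ^ k - m with hb
  clear_value k N b
  have hbN : b ≤ N := by omega
  have hNne : N ≠ 0 := by omega
  have hNsub : N - b = m - 1 := by omega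
  intro hdvd
  have hCpos : 0 < Nat.choose N b := Nat.choose_pos hbN
  have h1le := one_le_padicValNat_of_dvd hCpos.ne' hdvd
  have hlog : Nat.log p N < n + 1 := by
    apply Nat.log_lt_of_lt_pow hNne
    have e1 : p ^ (n + 1) = p * p ^ n := by ring
    have e2 : 2 * p ^ n ≤ p * p ^ n := Nat.mul_le_mul_right _ hp2
    omega
  have hval := padicValNat_choose (p := p) hbN hlog
  rw [hval] at h1le
  have hempty : (Finset.Ico 1 (n + 1)).filter
      (fun i => p ^ i ≤ b % p ^ i + (N - b) % p ^ i) = ∅ := by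
    rw [Finset.filter_eq_empty_iff]
    intro i hi
    simp only [Finset.mem_Ico] at hi
    push_neg
    rw [hNsub]
    have hpi_pos : 0 < p ^ i := Nat.pow_pos (by omega)
    have hpi_dvd_2pn : p ^ i ∣ 2 * p ^ n := Dvd.dvd.mul_left (pow_dvd_pow p (by omega)) 2
    by_cases hik : i ≤ k
    · -- low digits: b ≡ 0 mod p^i
      have h1 : p ^ i ∣ p ^ k := pow_dvd_pow p hik
      have h2 : p ^ i ∣ m := h1.trans hpk_dvd
      have h3 : p ^ i ∣ b := by
        have hbe : b = 2 * p ^ n - (p ^ k + m) := by omega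
        rw [hbe]
        exact Nat.dvd_sub hpi_dvd_2pn (Nat.dvd_add h1 h2)
      have hb0 : b % p ^ i = 0 := Nat.mod_eq_zero_of_dvd h3
      have h4 := Nat.mod_lt (m - 1) hpi_pos
      simpa [hb0] using h4
    · -- middle digits
      push_neg at hik
      set r := m % p ^ i with hr
      have hrlt : r < p ^ i := Nat.mod_lt _ hpi_pos
      clear_value r
      have hr0 : r ≠ 0 := by
        intro h0
        have : p ^ i ∣ m := Nat.dvd_of_mod_eq_zero (by rw [hr] at h0; exact h0)
        exact hnotdvd ((pow_dvd_pow p (by omega : k + 1 ≤ i)).trans this)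
      have hrk : p ^ k ∣ r := hr ▸ (Nat.dvd_mod_iff (pow_dvd_pow p hik.le)).mpr hpk_dvd
      have hrge : p ^ k ≤ r := Nat.le_of_dvd (by omega) hrk
      have hrle : r + p ^ k ≤ p ^ i := by
        have h1 : p ^ k ∣ p ^ i - r := Nat.dvd_sub (pow_dvd_pow p hik.le) hrk
        have := Nat.le_of_dvd (by omega) h1
        omega
      obtain hq := Nat.div_add_mod m (p ^ i)
      set q := m / p ^ i with hqdef
      clear_value q
      -- (m-1) % p^i = r - 1
      have hm1mod : (m - 1) % p ^ i = r - 1 := by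
        have he : m - 1 = (r - 1) + p ^ i * q := by omega
        rw [he, Nat.add_mul_mod_self_left, Nat.mod_eq_of_lt (by omega)]
      -- p^i ∣ b + p^k + r
      have hdvd2 : p ^ i ∣ b + p ^ k + r := by
        have he : b + p ^ k + r = (b + p ^ k + r + p ^ i * q) - p ^ i * q := by omega
        have he2 : b + p ^ k + r + p ^ i * q = 2 * p ^ n := by omega
        rw [he, he2]
        exact Nat.dvd_sub hpi_dvd_2pn (Dvd.intro _ rfl)
      -- hence p^i ∣ b % p^i + p^k + r, and this sum equals p^i
      have hmod0 : (b + p ^ k + r) % p ^ i = 0 := Nat.mod_eq_zero_of_dvd hdvd2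
      have hmod1 : (b % p ^ i + (p ^ k + r)) % p ^ i = 0 := by
        rw [Nat.mod_add_mod, ← Nat.add_assoc]
        exact hmod0
      have hdvd3 : p ^ i ∣ b % p ^ i + (p ^ k + r) := Nat.dvd_of_mod_eq_zero hmod1
      have hblt : b % p ^ i < p ^ i := Nat.mod_lt _ hpi_pos
      have hne : b % p ^ i + (p ^ k + r) ≠ 0 :=
        (Nat.add_pos_right _ (Nat.add_pos_left hpk_pos r)).ne'
      have hlt2 : b % p ^ i + (p ^ k + r) < 2 * p ^ i := by
        have aux : ∀ B Q S : ℕ, B < Q → S ≤ Q → B + S < 2 * Q := by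
          intro B Q S h1 h2; omega
        exact aux _ _ _ hblt (by omega)
      have hSeq : b % p ^ i + (p ^ k + r) = p ^ i :=
        Nat.eq_of_dvd_of_lt_two_mul hne hdvd3 hlt2
      rw [hm1mod]
      have aux2 : ∀ B Q P : ℕ, B + (P + r) = Q → 0 < P → B + (r - 1) < Q := by
        intro B Q P h1 h2; omega
      exact aux2 _ _ _ hSeq hpk_pos
  rw [hempty] at h1le
  simp at h1le
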